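/- For every integer k ≥ 1 and every complex (or real) z with |z| < 1, the series ∑_{n≥0} binom(2n+2k, n)·z^n/2^{2n} converges and equals 2^{2k}/(√(1−z)·(1+√(1−z))^{2k}). -/

import Mathlib

open Complex

open Finset Polynomial in
private lemma aux_neg_one_sq_pow (m : ℕ) : ((-1:ℚ))^m * (-1)^m = 1 := by
  rw [← pow_add]; exact Even.neg_one_pow ⟨m, rfl⟩

open Finset Polynomial in
private lemma aux_ring_choose_succ (r : ℚ) (n : ℕ) :
    (n + 1 : ℚ) * Ring.choose r (n + 1) = Ring.choose r n * (r - n) := by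
  have h1 := Ring.descPochhammer_eq_factorial_smul_choose r (n + 1)
  have h2 := Ring.descPochhammer_eq_factorial_smul_choose r n
  rw [descPochhammer_succ_right, smeval_mul, h2, smeval_sub, smeval_X, smeval_natCast] at h1
  have hfac2 : ((n).factorial : ℚ) ≠ 0 := Nat.cast_ne_zero.mpr (Nat.factorial_ne_zero _)
  simp only [nsmul_eq_mul, Nat.factorial_succ, Nat.cast_mul, pow_one, pow_zero, mul_one] at h1
  push_cast at h1
  exact mul_left_cancel₀ hfac2 (by linear_combination -h1)

open Finset Polynomial in
private lemma aux_ring_choose_neg_one (n : ℕ) : Ring.choose (-1 : ℚ) n = (-1) ^ n := by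
  induction n with
  | zero => simp
  | succ n ih =>
    have h := aux_ring_choose_succ (-1) n
    rw [ih] at h
    have hn : ((n:ℚ) + 1) ≠ 0 := by positivity
    apply mul_left_cancel₀ hn
    rw [h]; ring

open Finset Polynomial in
private lemma aux_ring_choose_neg_half (n : ℕ) :
    4 ^ n * Ring.choose (-(1/2) : ℚ) n = (-1) ^ n * (Nat.centralBinom n) := by
  induction n with
  | zero => simp [Nat.centralBinom]
  | succ n ih =>
    have h := aux_ring_choose_succ (-(1/2)) n
    have hcbq : ((n:ℚ) + 1) * (Nat.centralBinom (n+1)) = 2 * (2 * n + 1) * Nat.centralBinom n := by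
      exact_mod_cast congrArg (Nat.cast : ℕ → ℚ) (Nat.succ_mul_centralBinom_succ n)
    have hn : ((n:ℚ) + 1) ≠ 0 := by positivity
    apply mul_left_cancel₀ hn
    linear_combination (4^(n+1) : ℚ) * h + (-2-4*(n:ℚ)) * ih + (-1:ℚ)^n * hcbq

open Finset in
private lemma aux_vandermonde_central (n : ℕ) :
    ∑ ij ∈ antidiagonal n, Nat.centralBinom ij.1 * Nat.centralBinom ij.2 = 4 ^ n := by
  have h := Ring.add_choose_eq (r := (-(1/2) : ℚ)) (s := (-(1/2) : ℚ)) n (Commute.all _ _)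
  have hsum : (-(1/2) : ℚ) + (-(1/2)) = -1 := by norm_num
  rw [hsum, aux_ring_choose_neg_one] at h
  have hQ : (∑ ij ∈ antidiagonal n, ((Nat.centralBinom ij.1 : ℚ) * Nat.centralBinom ij.2))
      = 4 ^ n := by
    have hterm : ∀ ij ∈ antidiagonal n,
        ((Nat.centralBinom ij.1 : ℚ) * Nat.centralBinom ij.2)
          = (-1)^n * 4^n * (Ring.choose (-(1/2):ℚ) ij.1 * Ring.choose (-(1/2):ℚ) ij.2) := by
      intro ij hij
      have hs : ij.1 + ij.2 = n := Finset.HasAntidiagonal.mem_antidiagonal.mp hij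
      have e1' : (Nat.centralBinom ij.1 : ℚ)
          = (-1)^ij.1 * (4^ij.1 * Ring.choose (-(1/2):ℚ) ij.1) := by
        rw [aux_ring_choose_neg_half, ← mul_assoc, aux_neg_one_sq_pow, one_mul]
      have e2' : (Nat.centralBinom ij.2 : ℚ)
          = (-1)^ij.2 * (4^ij.2 * Ring.choose (-(1/2):ℚ) ij.2) := by
        rw [aux_ring_choose_neg_half, ← mul_assoc, aux_neg_one_sq_pow, one_mul]
      rw [e1', e2', ← hs, pow_add, pow_add]
      ring
    rw [Finset.sum_congr rfl hterm, ← Finset.mul_sum, ← h]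
    rcases Nat.even_or_odd n with he | ho
    · rw [he.neg_one_pow]; ring
    · rw [ho.neg_one_pow]; ring
  exact_mod_cast hQ

open Finset in
private lemma aux_choose_le_two_pow (m k : ℕ) : Nat.choose m k ≤ 2 ^ m := by
  rcases le_or_gt k m with h | h
  · calc Nat.choose m k ≤ ∑ i ∈ range (m+1), Nat.choose m i :=
        Finset.single_le_sum (fun i _ => Nat.zero_le _) (by simp [Nat.lt_succ_of_le h])
    _ = 2 ^ m := Nat.sum_range_choose m
  · rw [Nat.choose_eq_zero_of_lt h]; positivity

private lemma aux_norm_term_eq (c : ℕ) (z : ℂ) (n : ℕ) :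
    ‖(c : ℂ) * z^n / 4^n‖ = (c : ℝ) * ‖z‖ ^ n / 4^n := by
  rw [norm_div, norm_mul, norm_pow, norm_pow]
  simp [Complex.norm_natCast]

private lemma aux_summable_norm (m : ℕ) {z : ℂ} (hz : ‖z‖ < 1) :
    Summable (fun n : ℕ => ‖(Nat.choose (2*n+m) n : ℂ) * z^n / 4^n‖) := by
  refine Summable.of_nonneg_of_le (fun n => norm_nonneg _) (fun n => ?_)
    ((summable_geometric_of_lt_one (norm_nonneg z) hz).mul_left ((2:ℝ)^m))
  rw [aux_norm_term_eq]
  have hb : (Nat.choose (2*n+m) n : ℝ) ≤ 2^(2*n+m) := by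
    exact_mod_cast aux_choose_le_two_pow (2*n+m) n
  rw [div_le_iff₀ (by positivity)]
  calc (Nat.choose (2*n+m) n : ℝ) * ‖z‖ ^ n ≤ 2^(2*n+m) * ‖z‖ ^ n :=
        mul_le_mul_of_nonneg_right hb (by positivity)
    _ = 2^m * ‖z‖ ^ n * 4^n := by rw [pow_add, pow_mul]; ring

private noncomputable def Fc : ℂ → ℂ := fun z => ∑' n : ℕ, (Nat.centralBinom n : ℂ) * z^n / 4^n

private lemma aux_summable_norm_cb {z : ℂ} (hz : ‖z‖ < 1) :
    Summable (fun n : ℕ => ‖(Nat.centralBinom n : ℂ) * z^n / 4^n‖) := by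
  have := aux_summable_norm 0 hz
  simpa [Nat.centralBinom] using this

private lemma aux_continuousOn_Fc : ContinuousOn Fc (Metric.ball (0:ℂ) 1) := by
  intro z₀ hz₀
  apply ContinuousAt.continuousWithinAt
  rw [Metric.mem_ball, Complex.dist_eq, sub_zero] at hz₀
  set r : ℝ := (1 + ‖z₀‖)/2 with hr
  have hr0 : 0 ≤ r := by positivity
  have hr1 : r < 1 := by rw [hr]; linarith
  have hz₀r : ‖z₀‖ < r := by rw [hr]; linarith
  have hcont : ContinuousOn Fc (Metric.ball (0:ℂ) r) := by
    apply ContinuousOn.mono (s := Metric.closedBall (0:ℂ) r)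
    · apply continuousOn_tsum (u := fun n => r ^ n)
      · intro n
        apply ContinuousOn.div_const
        exact (continuousOn_const.mul (continuousOn_pow n))
      · exact summable_geometric_of_lt_one hr0 hr1
      · intro n x hx
        rw [Metric.mem_closedBall, Complex.dist_eq, sub_zero] at hx
        rw [aux_norm_term_eq, div_le_iff₀ (by positivity)]
        have hcb : (Nat.centralBinom n : ℝ) ≤ 4 ^ n := by
          have := aux_choose_le_two_pow (2*n) n
          rw [Nat.centralBinom]
          calc (Nat.choose (2*n) n : ℝ) ≤ (2:ℝ)^(2*n) := by exact_mod_cast this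
            _ = 4^n := by rw [pow_mul]; norm_num
        calc (Nat.centralBinom n : ℝ) * ‖x‖ ^ n ≤ 4^n * r^n :=
              mul_le_mul hcb (pow_le_pow_left₀ (norm_nonneg x) hx n)
                (by positivity) (by positivity)
          _ = r^n * 4^n := by ring
    · exact Metric.ball_subset_closedBall
  exact hcont.continuousAt ((Metric.isOpen_ball).mem_nhds (by
    rw [Metric.mem_ball, Complex.dist_eq, sub_zero]; exact hz₀r))

open Finset in
private lemma aux_Fc_sq {z : ℂ} (hz : ‖z‖ < 1) : Fc z * Fc z * (1 - z) = 1 := by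
  have hcauchy := tsum_mul_tsum_eq_tsum_sum_antidiagonal_of_summable_norm
    (f := fun n : ℕ => (Nat.centralBinom n : ℂ) * z^n / 4^n)
    (g := fun n : ℕ => (Nat.centralBinom n : ℂ) * z^n / 4^n)
    (aux_summable_norm_cb hz) (aux_summable_norm_cb hz)
  have hinner : ∀ n : ℕ, (∑ ij ∈ antidiagonal n,
      ((Nat.centralBinom ij.1 : ℂ) * z^ij.1 / 4^ij.1) *
        ((Nat.centralBinom ij.2 : ℂ) * z^ij.2 / 4^ij.2)) = z ^ n := by
    intro n
    have hc : ∀ ij ∈ antidiagonal n,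
        ((Nat.centralBinom ij.1 : ℂ) * z^ij.1 / 4^ij.1) *
          ((Nat.centralBinom ij.2 : ℂ) * z^ij.2 / 4^ij.2)
        = ((Nat.centralBinom ij.1 : ℂ) * Nat.centralBinom ij.2) * z^n / 4^n := by
      intro ij hij
      have hsum : ij.1 + ij.2 = n := Finset.HasAntidiagonal.mem_antidiagonal.mp hij
      rw [← hsum, pow_add, pow_add]
      field_simp
    have hV : (∑ ij ∈ antidiagonal n, (Nat.centralBinom ij.1 : ℂ) * Nat.centralBinom ij.2)
        = 4^n := by exact_mod_cast congrArg (Nat.cast (R := ℂ)) (aux_vandermonde_central n)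
    rw [Finset.sum_congr rfl hc, ← Finset.sum_div, ← Finset.sum_mul, hV]
    have h4 : (4:ℂ)^n ≠ 0 := by norm_num
    field_simp
  have hgeo : ∑' n : ℕ, z ^ n = (1 - z)⁻¹ :=
    tsum_geometric_of_norm_lt_one hz
  have hne : (1:ℂ) - z ≠ 0 := by
    intro h
    have : z = 1 := by linear_combination -h
    rw [this] at hz; simp at hz
  have : Fc z * Fc z = (1 - z)⁻¹ := by
    rw [Fc, hcauchy, tsum_congr hinner, hgeo]
  rw [this, inv_mul_cancel₀ hne]

private lemma aux_sqrt_sq {z : ℂ} : ((1 - z) ^ ((1:ℂ)/2)) ^ 2 = 1 - z := by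
  have h : ((1:ℂ)/2) = ((2:ℕ) : ℂ)⁻¹ := by norm_num
  rw [h]
  exact Complex.cpow_nat_inv_pow _ two_ne_zero

private lemma aux_one_sub_ne {z : ℂ} (hz : ‖z‖ < 1) : (1:ℂ) - z ≠ 0 := by
  intro h
  have : z = 1 := by linear_combination -h
  rw [this] at hz; simp at hz

private lemma aux_sqrt_ne {z : ℂ} (hz : ‖z‖ < 1) : (1 - z) ^ ((1:ℂ)/2) ≠ 0 := by
  intro h
  apply aux_one_sub_ne hz
  rw [← aux_sqrt_sq (z := z), h]; ring

private lemma aux_one_add_sqrt_ne {z : ℂ} (hz : ‖z‖ < 1) :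
    1 + (1 - z) ^ ((1:ℂ)/2) ≠ 0 := by
  intro h
  have hw : (1 - z) ^ ((1:ℂ)/2) = -1 := by linear_combination h
  have hz0 : z = 0 := by
    have h2 := aux_sqrt_sq (z := z)
    rw [hw] at h2
    linear_combination h2
  rw [hz0] at hw
  rw [sub_zero, Complex.one_cpow] at hw
  exact absurd hw (by norm_num)

private lemma aux_continuousOn_sqrt :
    ContinuousOn (fun z : ℂ => (1 - z) ^ ((1:ℂ)/2)) (Metric.ball (0:ℂ) 1) := by
  apply ContinuousOn.cpow_const
  · exact (continuous_const.sub continuous_id).continuousOn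
  · intro z hz
    rw [Metric.mem_ball, Complex.dist_eq, sub_zero] at hz
    rw [Complex.mem_slitPlane_iff]
    left
    simp only [Complex.sub_re, Complex.one_re]
    have := Complex.re_le_norm z
    linarith

private lemma aux_Fc_eq {z : ℂ} (hz : ‖z‖ < 1) :
    Fc z = ((1 - z) ^ ((1:ℂ)/2))⁻¹ := by
  set G : ℂ → ℂ := fun x => Fc x * (1 - x) ^ ((1:ℂ)/2) with hG
  have hball : ∀ x : ℂ, x ∈ Metric.ball (0:ℂ) 1 ↔ ‖x‖ < 1 := by
    intro x; rw [Metric.mem_ball, Complex.dist_eq, sub_zero]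
  have hGcont : ContinuousOn G (Metric.ball (0:ℂ) 1) :=
    aux_continuousOn_Fc.mul aux_continuousOn_sqrt
  have hGsq : ∀ x ∈ Metric.ball (0:ℂ) 1, G x = 1 ∨ G x = -1 := by
    intro x hx
    rw [hball] at hx
    have h2 : G x ^ 2 = 1 := by
      rw [hG]
      simp only
      rw [mul_pow, aux_sqrt_sq]
      calc Fc x ^ 2 * (1 - x) = Fc x * Fc x * (1 - x) := by ring
        _ = 1 := aux_Fc_sq hx
    have hfac : (G x - 1) * (G x + 1) = 0 := by linear_combination h2
    rcases mul_eq_zero.mp hfac with h | h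
    · left; linear_combination h
    · right; linear_combination h
  have hG0 : G 0 = 1 := by
    rw [hG]
    simp only
    have hF0 : Fc 0 = 1 := by
      rw [Fc]
      rw [tsum_eq_single 0 (fun n hn => by
        rcases Nat.exists_eq_succ_of_ne_zero hn with ⟨m, rfl⟩
        simp [zero_pow])]
      simp [Nat.centralBinom]
    rw [hF0, sub_zero, Complex.one_cpow, mul_one]
  set T : Set ℝ := (fun x => (G x).re) '' (Metric.ball (0:ℂ) 1) with hT
  have hTpre : IsPreconnected T :=
    ((convex_ball (0:ℂ) 1).isPreconnected).image _
      (Complex.continuous_re.comp_continuousOn hGcont)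
  have h0ball : (0:ℂ) ∈ Metric.ball (0:ℂ) 1 := by rw [hball]; simp
  have h1T : (1:ℝ) ∈ T := ⟨0, h0ball, by show (G 0).re = 1; rw [hG0]; simp⟩
  have hzball : z ∈ Metric.ball (0:ℂ) 1 := by rw [hball]; exact hz
  have hGz : G z = 1 := by
    rcases hGsq z hzball with h | h
    · exact h
    · exfalso
      have hm1T : (-1:ℝ) ∈ T := ⟨z, hzball, by show (G z).re = -1; rw [h]; simp⟩
      have h0T : (0:ℝ) ∈ T := hTpre.Icc_subset hm1T h1T (by norm_num)
      rcases h0T with ⟨x, hxball, hx⟩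
      simp only [] at hx
      rcases hGsq x hxball with h' | h' <;> rw [h'] at hx <;> simp at hx
  have hthis : Fc z * (1 - z) ^ ((1:ℂ)/2) = 1 := hGz
  exact eq_inv_of_mul_eq_one_left hthis

open Finset in
private lemma aux_main_lemma (m : ℕ) {z : ℂ} (hz : ‖z‖ < 1) :
    HasSum (fun n : ℕ => (Nat.choose (2*n+m) n : ℂ) * z^n / 4^n)
      (2^m / ((1 - z) ^ ((1:ℂ)/2) * (1 + (1 - z) ^ ((1:ℂ)/2))^m)) := by
  set w : ℂ := (1 - z) ^ ((1:ℂ)/2) with hw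
  have hw2 : w^2 = 1 - z := aux_sqrt_sq
  have hw0 : w ≠ 0 := aux_sqrt_ne hz
  have hw1 : 1 + w ≠ 0 := aux_one_add_sqrt_ne hz
  rcases eq_or_ne z 0 with rfl | hz0
  · have hww : w = 1 := by rw [hw, sub_zero, Complex.one_cpow]
    have h1 : (fun n : ℕ => (Nat.choose (2*n+m) n : ℂ) * (0:ℂ)^n / 4^n) 0
        = 2^m / (w * (1 + w)^m) := by
      rw [hww]
      norm_num
    have := hasSum_single (f := fun n : ℕ => (Nat.choose (2*n+m) n : ℂ) * (0:ℂ)^n / 4^n) 0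
      (fun n hn => by
        rcases Nat.exists_eq_succ_of_ne_zero hn with ⟨j, rfl⟩
        simp [zero_pow])
    rw [← h1]; exact this
  · have hbase : HasSum (fun n : ℕ => (Nat.choose (2*n+0) n : ℂ) * z^n / 4^n) w⁻¹ := by
      have hs : Summable (fun n : ℕ => (Nat.choose (2*n+0) n : ℂ) * z^n / 4^n) :=
        (aux_summable_norm 0 hz).of_norm
      have htsum : ∑' n : ℕ, (Nat.choose (2*n+0) n : ℂ) * z^n / 4^n = Fc z := by
        rw [Fc]; exact tsum_congr fun n => by rw [Nat.centralBinom, Nat.add_zero]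
      have := hs.hasSum
      rwa [htsum, aux_Fc_eq hz, ← hw] at this
    induction m using Nat.twoStepInduction with
    | zero =>
      have e : (2:ℂ)^0 / (w * (1 + w)^0) = w⁻¹ := by
        rw [pow_zero, pow_zero, mul_one, one_div]
      rw [e]
      exact hbase
    | one =>
      have hshift : HasSum (fun n : ℕ => (Nat.choose (2*(n+1)+0) (n+1) : ℂ) * z^(n+1) / 4^(n+1))
          (w⁻¹ - 1) := by
        apply (hasSum_nat_add_iff
          (f := fun n : ℕ => (Nat.choose (2*n+0) n : ℂ) * z^n / 4^n) 1).mpr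
        rw [Finset.sum_range_one]
        have e : (Nat.choose (2*0+0) 0 : ℂ) * z^0/4^0 = 1 := by norm_num
        rw [e]
        have e2 : w⁻¹ - 1 + 1 = w⁻¹ := by ring
        rw [e2]
        exact hbase
      have hfun : ∀ n : ℕ, (Nat.choose (2*(n+1)+0) (n+1) : ℂ) * z^(n+1) / 4^(n+1)
          = (z/2) * ((Nat.choose (2*n+1) n : ℂ) * z^n / 4^n) := by
        intro n
        have hch : Nat.choose (2*(n+1)+0) (n+1) = 2 * Nat.choose (2*n+1) n := by
          have e1 : 2*(n+1)+0 = (2*n+1)+1 := by omega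
          rw [e1, Nat.choose_succ_succ']
          have e2 : Nat.choose (2*n+1) (n+1) = Nat.choose (2*n+1) n := by
            have h3 := Nat.choose_symm (n := 2*n+1) (k := n+1) (by omega)
            have e3 : (2*n+1) - (n+1) = n := by omega
            rw [e3] at h3
            exact h3.symm
          rw [e2]; ring
        rw [hch]
        push_cast
        rw [pow_succ, pow_succ]
        field_simp
        ring
      rw [funext hfun] at hshift
      have hz2 : (z/2 : ℂ) ≠ 0 := by simpa using hz0
      have hmul := hshift.mul_left (z/2)⁻¹
      have hfun2 : (fun n : ℕ => (z/2)⁻¹ * ((z/2) * ((Nat.choose (2*n+1) n : ℂ) * z^n / 4^n)))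
          = fun n : ℕ => (Nat.choose (2*n+1) n : ℂ) * z^n / 4^n :=
        funext fun n => inv_mul_cancel_left₀ hz2 _
      rw [hfun2] at hmul
      have hval : (z/2)⁻¹ * (w⁻¹ - 1) = 2^1 / (w * (1 + w)^1) := by
        field_simp
        linear_combination (-1) * hw2
      rwa [hval] at hmul
    | more m ihm ihm1 =>
      have hA := ihm
      have hB := ihm1
      have hsub := hB.sub hA
      have hfunD : (fun n : ℕ => (Nat.choose (2*n+(m+1)) n : ℂ) * z^n/4^n
            - (Nat.choose (2*n+m) n : ℂ) * z^n/4^n)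
          = fun n : ℕ => ((Nat.choose (2*n+m+1) n : ℂ) - (Nat.choose (2*n+m) n : ℂ)) * z^n/4^n := by
        funext n
        have e : 2*n+(m+1) = 2*n+m+1 := by omega
        rw [e]; ring
      rw [hfunD] at hsub
      have hshift : HasSum (fun n : ℕ => ((Nat.choose (2*(n+1)+m+1) (n+1) : ℂ)
            - (Nat.choose (2*(n+1)+m) (n+1) : ℂ)) * z^(n+1)/4^(n+1))
          (2^(m+1) / (w * (1 + w)^(m+1)) - 2^m / (w * (1 + w)^m)) := by
        apply (hasSum_nat_add_iff (f := fun n : ℕ => ((Nat.choose (2*n+m+1) n : ℂ)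
          - (Nat.choose (2*n+m) n : ℂ)) * z^n/4^n) 1).mpr
        rw [Finset.sum_range_one]
        have hD0 : ((Nat.choose (2*0+m+1) 0 : ℂ) - (Nat.choose (2*0+m) 0 : ℂ)) * z^0/4^0 = 0 := by
          simp
        rw [hD0, add_zero]
        exact hsub
      have hfun3 : ∀ n : ℕ, ((Nat.choose (2*(n+1)+m+1) (n+1) : ℂ)
            - (Nat.choose (2*(n+1)+m) (n+1) : ℂ)) * z^(n+1)/4^(n+1)
          = (z/4) * ((Nat.choose (2*n+(m+2)) n : ℂ) * z^n / 4^n) := by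
        intro n
        have hch : Nat.choose (2*(n+1)+m+1) (n+1)
            = Nat.choose (2*n+(m+2)) n + Nat.choose (2*(n+1)+m) (n+1) := by
          have e1 : 2*(n+1)+m+1 = (2*n+m+2)+1 := by omega
          have e2 : 2*(n+1)+m = 2*n+m+2 := by omega
          have e3 : 2*n+(m+2) = 2*n+m+2 := by omega
          rw [e1, e2, e3, Nat.choose_succ_succ']
        rw [hch]
        push_cast
        rw [pow_succ, pow_succ]
        field_simp
        ring
      rw [funext hfun3] at hshift
      have hz4 : (z/4 : ℂ) ≠ 0 := by simpa using hz0
      have hmul := hshift.mul_left (z/4)⁻¹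
      have hfun4 : (fun n : ℕ => (z/4)⁻¹ * ((z/4) * ((Nat.choose (2*n+(m+2)) n : ℂ) * z^n / 4^n)))
          = fun n : ℕ => (Nat.choose (2*n+(m+2)) n : ℂ) * z^n / 4^n :=
        funext fun n => inv_mul_cancel_left₀ hz4 _
      rw [hfun4] at hmul
      have hkey : 2^(m+1) / (w * (1 + w)^(m+1)) - 2^m / (w * (1 + w)^m)
          = (z/4) * (2^(m+2) / (w * (1 + w)^(m+2))) := by
        have hu : (2/(1+w)) - 1 = (z/4) * (2/(1+w))^2 := by
          field_simp
          linear_combination (-4) * hw2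
        calc 2^(m+1) / (w * (1 + w)^(m+1)) - 2^m / (w * (1 + w)^m)
            = ((2/(1+w))^m / w) * ((2/(1+w)) - 1) := by
              rw [div_pow]
              field_simp
              ring
          _ = ((2/(1+w))^m / w) * ((z/4) * (2/(1+w))^2) := by rw [hu]
          _ = (z/4) * (2^(m+2) / (w * (1 + w)^(m+2))) := by
              rw [div_pow]
              field_simp
              ring
      have hval : (z/4)⁻¹ * (2^(m+1) / (w * (1 + w)^(m+1)) - 2^m / (w * (1 + w)^m))
          = 2^(m+2) / (w * (1 + w)^(m+2)) := by
        rw [hkey, inv_mul_cancel_left₀ hz4]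
      rwa [hval] at hmul

theorem stmt3 (k : ℕ) (hk : 1 ≤ k) (z : ℂ) (hz : ‖z‖ < 1) :
    HasSum (fun n : ℕ => (Nat.choose (2 * n + 2 * k) n : ℂ) * z ^ n / 2 ^ (2 * n))
      (2 ^ (2 * k) / ((1 - z) ^ ((1 : ℂ) / 2) * (1 + (1 - z) ^ ((1 : ℂ) / 2)) ^ (2 * k))) := by
  have h := aux_main_lemma (2*k) hz
  have hfun : (fun n : ℕ => (Nat.choose (2 * n + 2 * k) n : ℂ) * z ^ n / 2 ^ (2 * n))
      = fun n : ℕ => (Nat.choose (2*n+2*k) n : ℂ) * z^n / 4^n := by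
    funext n
    rw [show ((2:ℂ))^(2*n) = 4^n by rw [pow_mul]; norm_num]
  rw [hfun]
  exact h
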